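/- Variational formula for the potential: let $H \in \mathbb{C}^{n\times n}$ be upper Hessenberg with subdiagonal entries $h_{i+1,i}$, and for $1 \le k \le n-1$ define $\psi_k(H) = |h_{n-k+1,n-k}\cdots h_{n,n-1}|^{1/k}$. Then $\psi_k(H) = \min_{p} \|e_n^* p(H)\|^{1/k}$, where the minimum is over all monic polynomials $p$ of degree $k$, and the minimum is attained by the characteristic polynomial $\chi_k$ of the bottom-right $k \times k$ corner of $H$. -/

import Mathlib

open Polynomial Matrix

/-- The Euclidean norm of the last row of a matrix, i.e. `‖eₙ* A‖`. -/
noncomputable def rowNorm {n : ℕ} (A : Matrix (Fin (n + 1)) (Fin (n + 1)) ℂ) : ℝ :=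
  Real.sqrt (∑ j, ‖A (Fin.last n) j‖ ^ 2)

/-- The potential `ψ_k(H)`: geometric mean of the absolute values of the bottom `k`
subdiagonal entries of the `(n+1) × (n+1)` Hessenberg matrix `H`. -/
noncomputable def psi {n : ℕ} (k : ℕ) (hk : k ≤ n)
    (H : Matrix (Fin (n + 1)) (Fin (n + 1)) ℂ) : ℝ :=
  (∏ j : Fin k, ‖
      (H ⟨n - k + ↑j + 1, by have := j.isLt; omega⟩ ⟨n - k + ↑j, by have := j.isLt; omega⟩)‖) ^
    (1 / (k : ℝ))

/-- Embedding of the bottom-right `k × k` corner indices. -/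
def cornerEmb {n : ℕ} (k : ℕ) (hk : k ≤ n) (j : Fin k) : Fin (n + 1) :=
  ⟨n + 1 - k + ↑j, by have := j.isLt; omega⟩

section Aux

variable {n : ℕ} (H : Matrix (Fin (n + 1)) (Fin (n + 1)) ℂ)

lemma hcongr {a b c d : Fin (n + 1)} (h1 : (a : ℕ) = (c : ℕ)) (h2 : (b : ℕ) = (d : ℕ)) :
    H a b = H c d := by
  congr 1 <;> exact Fin.ext ‹_›

variable (hHess : ∀ i j : Fin (n + 1), (j : ℕ) + 1 < (i : ℕ) → H i j = 0)

include hHess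

lemma rowzero : ∀ (m : ℕ) (j : Fin (n + 1)), (j : ℕ) + m < n → (H ^ m) (Fin.last n) j = 0 := by
  intro m
  induction m with
  | zero =>
    intro j hj
    rw [pow_zero]
    refine Matrix.one_apply_ne fun h => ?_
    have : (n : ℕ) = (j : ℕ) := congrArg Fin.val h
    omega
  | succ m ih =>
    intro j hj
    rw [pow_succ, Matrix.mul_apply]
    refine Finset.sum_eq_zero fun i _ => ?_
    by_cases hi : (i : ℕ) + m < n
    · rw [ih i hi, zero_mul]
    · rw [hHess i j (by omega), mul_zero]

lemma rowprod : ∀ (m : ℕ) (hm : m ≤ n),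
    (H ^ m) (Fin.last n) ⟨n - m, by omega⟩ =
      ∏ j : Fin m, H ⟨n - m + ↑j + 1, by have := j.isLt; omega⟩
        ⟨n - m + ↑j, by have := j.isLt; omega⟩ := by
  intro m
  induction m with
  | zero =>
    intro _
    rw [pow_zero]
    simp [Matrix.one_apply, Fin.last, Fin.ext_iff]
  | succ m ih =>
    intro hm
    rw [pow_succ, Matrix.mul_apply]
    rw [Finset.sum_eq_single (⟨n - m, by omega⟩ : Fin (n + 1))]
    · rw [ih (by omega), Fin.prod_univ_succ, mul_comm]
      congr 1
      · exact hcongr H (by simp <;> omega) (by simp <;> omega)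
      · refine Finset.prod_congr rfl fun j _ => hcongr H ?_ ?_
        · simp [Fin.val_succ] <;> omega
        · simp [Fin.val_succ] <;> omega
    · intro i _ hne
      by_cases hi : (i : ℕ) + m < n
      · rw [rowzero H hHess m i hi, zero_mul]
      · have hiv : (i : ℕ) ≠ n - m := fun h => hne (Fin.ext h)
        rw [hHess i _ (show n - (m + 1) + 1 < (i : ℕ) by omega), mul_zero]
    · intro h; exact absurd (Finset.mem_univ _) h

lemma rowcorner (k : ℕ) (hk1 : 1 ≤ k) (hkn : k ≤ n) :
    ∀ (m : ℕ), m ≤ k → ∀ (j : Fin k),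
      (H ^ m) (Fin.last n) (cornerEmb k hkn j) =
        ((H.submatrix (cornerEmb k hkn) (cornerEmb k hkn)) ^ m) ⟨k - 1, by omega⟩ j := by
  intro m
  induction m with
  | zero =>
    intro _ j
    rw [pow_zero, pow_zero]
    by_cases h : j = (⟨k - 1, by omega⟩ : Fin k)
    · subst h
      have he : cornerEmb k hkn ⟨k - 1, by omega⟩ = Fin.last n :=
        Fin.ext (show n + 1 - k + (k - 1) = n by omega)
      rw [he, Matrix.one_apply_eq, Matrix.one_apply_eq]
    · rw [Matrix.one_apply_ne, Matrix.one_apply_ne]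
      · exact fun hh => h hh.symm
      · have hjv : (j : ℕ) ≠ k - 1 := fun hv => h (Fin.ext hv)
        intro hh
        have hvv : (n : ℕ) = n + 1 - k + (j : ℕ) := congrArg Fin.val hh
        have hj := j.isLt
        omega
  | succ m ih =>
    intro hm j
    rw [pow_succ, pow_succ, Matrix.mul_apply, Matrix.mul_apply]
    have hinj : ∀ x ∈ Finset.univ, ∀ y ∈ Finset.univ,
        cornerEmb k hkn x = cornerEmb k hkn y → x = y := by
      intro x _ y _ h
      have := congrArg Fin.val h
      simp only [cornerEmb] at this
      exact Fin.ext (by omega)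
    calc ∑ i, (H ^ m) (Fin.last n) i * H i (cornerEmb k hkn j)
        = ∑ i ∈ Finset.univ.image (cornerEmb k hkn),
            (H ^ m) (Fin.last n) i * H i (cornerEmb k hkn j) := by
          refine (Finset.sum_subset (Finset.subset_univ _) fun x _ hx => ?_).symm
          have hxlt := x.isLt
          have hxv : (x : ℕ) < n + 1 - k := by
            by_contra hc
            exact hx (Finset.mem_image.mpr ⟨⟨(x : ℕ) - (n + 1 - k), by omega⟩,
              Finset.mem_univ _, Fin.ext (show n + 1 - k + ((x : ℕ) - (n + 1 - k)) = (x : ℕ) by omega)⟩)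
          rw [rowzero H hHess m x (by omega), zero_mul]
      _ = ∑ i' : Fin k, (H ^ m) (Fin.last n) (cornerEmb k hkn i') *
            H (cornerEmb k hkn i') (cornerEmb k hkn j) := Finset.sum_image hinj
      _ = _ := Finset.sum_congr rfl fun i' _ => by rw [ih (by omega) i']; rfl

lemma rowpoly (k : ℕ) (hk1 : 1 ≤ k) (hkn : k ≤ n) (p : ℂ[X]) (hdeg : p.natDegree ≤ k)
    (j : Fin k) :
    (aeval H p) (Fin.last n) (cornerEmb k hkn j) =
      (aeval (H.submatrix (cornerEmb k hkn) (cornerEmb k hkn)) p) ⟨k - 1, by omega⟩ j := by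
  rw [aeval_eq_sum_range, aeval_eq_sum_range]
  simp only [Matrix.sum_apply, Matrix.smul_apply]
  refine Finset.sum_congr rfl fun i hi => ?_
  have hik : i ≤ k := by have := Finset.mem_range.mp hi; omega
  rw [rowcorner H hHess k hk1 hkn i hik j]

end Aux

/-- Variational formula for the potential: for an upper Hessenberg matrix `H`,
`ψ_k(H) = min_p ‖eₙ* p(H)‖^{1/k}` over monic polynomials `p` of degree `k`, with the
minimum attained at the characteristic polynomial of the bottom-right `k × k` corner. -/
theorem stmt5 {n k : ℕ} (hk1 : 1 ≤ k) (hkn : k ≤ n)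
    (H : Matrix (Fin (n + 1)) (Fin (n + 1)) ℂ)
    (hHess : ∀ i j : Fin (n + 1), (j : ℕ) + 1 < (i : ℕ) → H i j = 0) :
    (∀ p : ℂ[X], p.Monic → p.natDegree = k →
        psi k hkn H ≤ rowNorm (aeval H p) ^ (1 / (k : ℝ))) ∧
      rowNorm (aeval H (H.submatrix (cornerEmb k hkn) (cornerEmb k hkn)).charpoly) ^
          (1 / (k : ℝ)) =
        psi k hkn H := by
  have hnk : n - k < n + 1 := by omega
  set c : ℝ := ‖(H ^ k) (Fin.last n) ⟨n - k, hnk⟩‖ with hc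
  have hcnn : 0 ≤ c := norm_nonneg _
  have hpsi : psi k hkn H = c ^ (1 / (k : ℝ)) := by
    unfold psi
    rw [hc, rowprod H hHess k hkn, norm_prod]
  have key : ∀ p : ℂ[X], p.Monic → p.natDegree = k →
      (aeval H p) (Fin.last n) ⟨n - k, hnk⟩ = (H ^ k) (Fin.last n) ⟨n - k, hnk⟩ := by
    intro p hm hdeg
    rw [aeval_eq_sum_range]
    simp only [Matrix.sum_apply, Matrix.smul_apply]
    rw [hdeg, Finset.sum_eq_single k]
    · have hco : p.coeff k = 1 := by rw [← hdeg]; exact hm.coeff_natDegree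
      rw [hco, one_smul]
    · intro i hi hne
      have hik : i < k := by have := Finset.mem_range.mp hi; omega
      rw [rowzero H hHess i _ (show n - k + i < n by omega), smul_zero]
    · intro h; exact absurd (Finset.self_mem_range_succ k) h
  have zerocol : ∀ p : ℂ[X], p.natDegree ≤ k → ∀ j : Fin (n + 1), (j : ℕ) + k < n →
      (aeval H p) (Fin.last n) j = 0 := by
    intro p hdeg j hj
    rw [aeval_eq_sum_range]
    simp only [Matrix.sum_apply, Matrix.smul_apply]
    refine Finset.sum_eq_zero fun i hi => ?_
    have hik : i ≤ k := by have := Finset.mem_range.mp hi; omega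
    rw [rowzero H hHess i j (by omega), smul_zero]
  constructor
  · intro p hmon hdeg
    rw [hpsi]
    refine Real.rpow_le_rpow hcnn ?_ (by positivity)
    unfold rowNorm
    have h1 : c ^ 2 ≤ ∑ j, ‖(aeval H p) (Fin.last n) j‖ ^ 2 := by
      have hs := Finset.single_le_sum
        (f := fun j => ‖(aeval H p) (Fin.last n) j‖ ^ 2)
        (fun j _ => by positivity) (Finset.mem_univ (⟨n - k, hnk⟩ : Fin (n + 1)))
      beta_reduce at hs
      rwa [key p hmon hdeg, ← hc] at hs
    calc c = Real.sqrt (c ^ 2) := (Real.sqrt_sq hcnn).symm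
      _ ≤ _ := Real.sqrt_le_sqrt h1
  · have hmon : (H.submatrix (cornerEmb k hkn) (cornerEmb k hkn)).charpoly.Monic :=
      Matrix.charpoly_monic _
    have hdeg : (H.submatrix (cornerEmb k hkn) (cornerEmb k hkn)).charpoly.natDegree = k := by
      rw [Matrix.charpoly_natDegree_eq_dim, Fintype.card_fin]
    have hzero : ∀ j : Fin (n + 1), j ≠ ⟨n - k, hnk⟩ →
        (aeval H (H.submatrix (cornerEmb k hkn) (cornerEmb k hkn)).charpoly)
          (Fin.last n) j = 0 := by
      intro j hne
      by_cases hj : (j : ℕ) + k < n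
      · exact zerocol _ (le_of_eq hdeg) j hj
      · have hjlt := j.isLt
        have hj2 : n + 1 - k ≤ (j : ℕ) := by
          have : (j : ℕ) ≠ n - k := fun h => hne (Fin.ext h)
          omega
        have hje : j = cornerEmb k hkn ⟨(j : ℕ) - (n + 1 - k), by omega⟩ :=
          Fin.ext (show (j : ℕ) = n + 1 - k + ((j : ℕ) - (n + 1 - k)) by omega)
        rw [hje, rowpoly H hHess k hk1 hkn _ (le_of_eq hdeg),
          Matrix.aeval_self_charpoly]
        rfl
    have hrow : rowNorm (aeval H (H.submatrix (cornerEmb k hkn) (cornerEmb k hkn)).charpoly)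
        = c := by
      unfold rowNorm
      rw [Finset.sum_eq_single (⟨n - k, hnk⟩ : Fin (n + 1))]
      · rw [key _ hmon hdeg, ← hc, Real.sqrt_sq hcnn]
      · intro j _ hne
        rw [hzero j hne]
        simp
      · intro h; exact absurd (Finset.mem_univ _) h
    rw [hrow, hpsi]
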